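/- Autocorrelator-to-correlator bound: in a finite-dimensional complex inner product space V with a one-parameter unitary group U_t = Σ_k e^{−iE_k t}P_k, let w, w₊ : ℝ → ℝ≥0 be weights with ∫w = ∫w₊ = 1, let ΔE > 0, and suppose |ŵ(E)| ≤ w₀ for all eigenvalues E with |E| ≥ ΔE, ŵ₊(E) ≥ 0 for all eigenvalues E, and ŵ₊(E) > W > 0 for all eigenvalues E with |E| < ΔE. Then for all A, B ∈ V: |∫ w(t)⟨B, U_t A⟩ dt| ≤ (√[(1/W)·∫ w₊(t)⟨A, U_t A⟩ dt] + w₀·√⟨A,A⟩)·√⟨B,B⟩. -/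

import Mathlib

open MeasureTheory Finset

set_option maxHeartbeats 1000000 in
/-- **autocorrelator-to-correlator bound.** In a finite-dimensional complex inner
product space with a one-parameter unitary group `U_t = Σ_k e^{−iE_k t} P_k`, given weights
`w, w₊ ≥ 0` with `∫w = ∫w₊ = 1`, `ΔE > 0`, and constants `w₀ ≥ 0`, `W > 0` such that
`|wF(E_k)| ≤ w₀` for `|E_k| ≥ ΔE`, `wF₊(E_k) ≥ 0` for all `k`, and `wF₊(E_k) > W` for
`|E_k| < ΔE`, then for all `A, B`:
`|∫ w(t)⟨B, U_t A⟩dt| ≤ (√[(1/W)∫ w₊(t)⟨A, U_t A⟩dt] + w₀·√⟨A,A⟩)·√⟨B,B⟩`. -/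
theorem stmt9 {V : Type*} [NormedAddCommGroup V] [InnerProductSpace ℂ V]
    [FiniteDimensional ℂ V]
    {m : ℕ} (E : Fin m → ℝ) (Pk : Fin m → (V →ₗ[ℂ] V))
    (hproj : ∀ k, Pk k ∘ₗ Pk k = Pk k)
    (horth : ∀ j k, j ≠ k → Pk j ∘ₗ Pk k = 0)
    (hsa : ∀ k (x y : V), (inner ℂ (Pk k x) y : ℂ) = inner ℂ x (Pk k y))
    (hcomplete : ∑ k, Pk k = LinearMap.id)
    (U : ℝ → (V →ₗ[ℂ] V))
    (hU : ∀ t, U t = ∑ k, Complex.exp (-Complex.I * (E k) * t) • Pk k)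
    (w wplus : ℝ → ℝ)
    (hw0 : ∀ t, 0 ≤ w t) (hwInt : Integrable w) (hw1 : ∫ t, w t = 1)
    (hwp0 : ∀ t, 0 ≤ wplus t) (hwpInt : Integrable wplus) (hwp1 : ∫ t, wplus t = 1)
    (ΔE w₀ W : ℝ) (hΔE : 0 < ΔE) (hw₀ : 0 ≤ w₀) (hW : 0 < W)
    (hhatw : ∀ k, ΔE ≤ |E k| →
      ‖∫ t, (w t : ℂ) * Complex.exp (-Complex.I * (E k) * t)‖ ≤ w₀)
    (hhatwp_nonneg : ∀ k,
      0 ≤ (∫ t, (wplus t : ℂ) * Complex.exp (-Complex.I * (E k) * t)).re ∧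
      (∫ t, (wplus t : ℂ) * Complex.exp (-Complex.I * (E k) * t)).im = 0)
    (hhatwp_W : ∀ k, |E k| < ΔE →
      W < (∫ t, (wplus t : ℂ) * Complex.exp (-Complex.I * (E k) * t)).re)
    (A B : V) :
    ‖∫ t, (w t : ℂ) * (inner ℂ B (U t A) : ℂ)‖
      ≤ (Real.sqrt ((1 / W) * ∫ t, wplus t * ((inner ℂ A (U t A) : ℂ)).re)
          + w₀ * Real.sqrt ((inner ℂ A A : ℂ).re))
        * Real.sqrt ((inner ℂ B B : ℂ).re) := by
  classical
  -- abbreviations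
  set wF : Fin m → ℂ := fun k => ∫ t, (w t : ℂ) * Complex.exp (-Complex.I * (E k) * t) with hwF
  set wpF : Fin m → ℂ := fun k => ∫ t, (wplus t : ℂ) * Complex.exp (-Complex.I * (E k) * t) with hwpF
  set a : Fin m → ℝ := fun k => ‖Pk k A‖ with ha
  set b : Fin m → ℝ := fun k => ‖Pk k B‖ with hb
  set S : Finset (Fin m) := Finset.univ.filter (fun k => |E k| < ΔE) with hS
  -- basic projection facts
  have hPP : ∀ k (x : V), Pk k (Pk k x) = Pk k x := by
    intro k x
    have := LinearMap.ext_iff.mp (hproj k) x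
    simpa using this
  have hinner_proj : ∀ k (x y : V), (inner ℂ x (Pk k y) : ℂ) = inner ℂ (Pk k x) (Pk k y) := by
    intro k x y
    calc (inner ℂ x (Pk k y) : ℂ) = inner ℂ x (Pk k (Pk k y)) := by rw [hPP]
      _ = inner ℂ (Pk k x) (Pk k y) := (hsa k x (Pk k y)).symm
  have hnormsq : ∀ k (x : V), (inner ℂ x (Pk k x) : ℂ) = ((‖Pk k x‖^2 : ℝ) : ℂ) := by
    intro k x
    rw [hinner_proj]
    exact_mod_cast inner_self_eq_norm_sq_to_K (Pk k x)
  have hsum_proj : ∀ x : V, ∑ k, Pk k x = x := by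
    intro x
    have := LinearMap.ext_iff.mp hcomplete x
    simpa [LinearMap.sum_apply] using this
  have hsum_normsq : ∀ x : V, ∑ k, ‖Pk k x‖^2 = (inner ℂ x x : ℂ).re := by
    intro x
    have h1 : (inner ℂ x x : ℂ) = ∑ k, (inner ℂ x (Pk k x) : ℂ) := by
      rw [← inner_sum, hsum_proj x]
    rw [h1, Complex.re_sum]
    refine Finset.sum_congr rfl fun k _ => ?_
    rw [hnormsq]
    exact (Complex.ofReal_re _).symm
  -- |exp(-iEt)| = 1
  have hexp_abs : ∀ (e t : ℝ), ‖(Complex.exp (-(Complex.I * e * t)))‖ = 1 := by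
    intro e t
    rw [Complex.norm_exp]
    simp [Complex.mul_re]
  -- integrability
  have hIntExp : ∀ (f : ℝ → ℝ), Integrable f → ∀ e : ℝ,
      Integrable (fun t : ℝ => (f t : ℂ) * Complex.exp (-Complex.I * e * t)) := by
    intro f hf e
    have hc : Continuous fun t : ℝ => Complex.exp (-Complex.I * e * t) := by
      apply Complex.continuous_exp.comp
      continuity
    have := (hf.ofReal (𝕜 := ℂ)).bdd_mul (c := 1) hc.aestronglyMeasurable
      (Filter.Eventually.of_forall fun t => by simp [neg_mul, hexp_abs])
    simpa [mul_comm] using this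
  -- pointwise expansion
  have h1 : ∀ (f : ℝ → ℝ) (x y : V) (t : ℝ), (f t : ℂ) * (inner ℂ x (U t y) : ℂ)
      = ∑ k, (inner ℂ x (Pk k y) : ℂ) • ((f t : ℂ) * Complex.exp (-Complex.I*(E k)*t)) := by
    intro f x y t
    rw [hU]
    simp only [LinearMap.sum_apply, LinearMap.smul_apply, inner_sum, inner_smul_right,
      Finset.mul_sum, smul_eq_mul]
    exact Finset.sum_congr rfl fun k _ => by ring
  have hexpand : ∀ (f : ℝ → ℝ), Integrable f → ∀ (x y : V),
      ∫ t, (f t : ℂ) * (inner ℂ x (U t y) : ℂ)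
        = ∑ k, (∫ t, (f t : ℂ) * Complex.exp (-Complex.I * (E k) * t)) * (inner ℂ x (Pk k y) : ℂ) := by
    intro f hf x y
    calc ∫ t, (f t : ℂ) * (inner ℂ x (U t y) : ℂ)
        = ∫ t, ∑ k, (inner ℂ x (Pk k y) : ℂ) • ((f t : ℂ) * Complex.exp (-Complex.I*(E k)*t)) := by
          simp_rw [h1 f x y]
      _ = ∑ k, ∫ t, (inner ℂ x (Pk k y) : ℂ) • ((f t : ℂ) * Complex.exp (-Complex.I*(E k)*t)) :=
          integral_finset_sum _ (fun k _ => by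
            simpa [smul_eq_mul] using (hIntExp f hf (E k)).const_mul (inner ℂ x (Pk k y) : ℂ))
      _ = ∑ k, (∫ t, (f t : ℂ) * Complex.exp (-Complex.I * (E k) * t)) * (inner ℂ x (Pk k y) : ℂ) := by
          refine Finset.sum_congr rfl fun k _ => ?_
          rw [integral_smul]
          rw [smul_eq_mul]
          exact mul_comm _ _
  -- the LHS as a finite sum
  have hLHS : (∫ t, (w t : ℂ) * (inner ℂ B (U t A) : ℂ)) = ∑ k, wF k * (inner ℂ B (Pk k A) : ℂ) :=
    hexpand w hwInt B A
  -- the autocorrelator integral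
  set X : ℝ := ∫ t, wplus t * ((inner ℂ A (U t A) : ℂ)).re with hX
  have hXeq : X = ∑ k, (wpF k).re * a k ^ 2 := by
    have hint : Integrable (fun t => (wplus t : ℂ) * (inner ℂ A (U t A) : ℂ)) := by
      rw [show (fun t => (wplus t : ℂ) * (inner ℂ A (U t A) : ℂ)) = fun t =>
        ∑ k, (inner ℂ A (Pk k A) : ℂ) • ((wplus t : ℂ) * Complex.exp (-Complex.I*(E k)*t)) from
        funext (h1 wplus A A)]
      exact integrable_finset_sum _ (fun k _ => by
        simpa [smul_eq_mul] using (hIntExp wplus hwpInt (E k)).const_mul (inner ℂ A (Pk k A) : ℂ))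
    have h2 : X = (∫ t, (wplus t : ℂ) * (inner ℂ A (U t A) : ℂ)).re := by
      have h3 := integral_re hint
      simp only [RCLike.re_to_complex] at h3
      rw [hX, ← h3]
      refine integral_congr_ae (Filter.Eventually.of_forall fun t => ?_)
      simp [Complex.mul_re]
    rw [h2, hexpand wplus hwpInt A A, Complex.re_sum]
    refine Finset.sum_congr rfl fun k _ => ?_
    rw [hnormsq k A]
    simp [hwpF, ha, Complex.mul_re, ← Complex.ofReal_pow]
  -- per-term Cauchy-Schwarz
  have habs_inner : ∀ k, ‖(inner ℂ B (Pk k A) : ℂ)‖ ≤ b k * a k := by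
    intro k
    rw [hinner_proj]
    have := norm_inner_le_norm (𝕜 := ℂ) (Pk k B) (Pk k A)
    simpa using this
  -- |wF k| ≤ 1
  have hwF1 : ∀ k, ‖(wF k)‖ ≤ 1 := by
    intro k
    calc ‖wF k‖ ≤ ∫ t, ‖(w t : ℂ) * Complex.exp (-Complex.I * (E k) * t)‖ :=
        norm_integral_le_integral_norm _
      _ = ∫ t, w t := by
          refine integral_congr_ae (Filter.Eventually.of_forall fun t => ?_)
          simp [norm_mul, hexp_abs, abs_of_nonneg (hw0 t)]
      _ = 1 := hw1
  -- nonnegativity of X and of sums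
  have hwpF_nn : ∀ k, 0 ≤ (wpF k).re := fun k => (hhatwp_nonneg k).1
  have hX_nn : 0 ≤ X := by
    rw [hXeq]
    exact Finset.sum_nonneg fun k _ => mul_nonneg (hwpF_nn k) (sq_nonneg _)
  -- finset Cauchy-Schwarz
  have hCS : ∀ s : Finset (Fin m),
      ∑ k ∈ s, b k * a k ≤ Real.sqrt (∑ k ∈ s, a k ^ 2) * Real.sqrt (∑ k ∈ s, b k ^ 2) := by
    intro s
    have h0 : 0 ≤ ∑ k ∈ s, b k * a k :=
      Finset.sum_nonneg fun k _ => mul_nonneg (norm_nonneg _) (norm_nonneg _)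
    have h2 := Finset.sum_mul_sq_le_sq_mul_sq s b a
    calc ∑ k ∈ s, b k * a k = Real.sqrt ((∑ k ∈ s, b k * a k) ^ 2) := (Real.sqrt_sq h0).symm
      _ ≤ Real.sqrt ((∑ k ∈ s, b k ^ 2) * ∑ k ∈ s, a k ^ 2) := Real.sqrt_le_sqrt h2
      _ = Real.sqrt (∑ k ∈ s, a k ^ 2) * Real.sqrt (∑ k ∈ s, b k ^ 2) := by
          rw [mul_comm ((∑ k ∈ s, b k ^ 2)), Real.sqrt_mul (Finset.sum_nonneg fun k _ => sq_nonneg _), mul_comm]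
  -- bounds on partial sums of a², b²
  have hbB : ∀ s : Finset (Fin m), ∑ k ∈ s, b k ^ 2 ≤ (inner ℂ B B : ℂ).re := by
    intro s
    rw [← hsum_normsq B]
    exact Finset.sum_le_sum_of_subset_of_nonneg (Finset.subset_univ s)
      (fun k _ _ => sq_nonneg _)
  have haA : ∀ s : Finset (Fin m), ∑ k ∈ s, a k ^ 2 ≤ (inner ℂ A A : ℂ).re := by
    intro s
    rw [← hsum_normsq A]
    exact Finset.sum_le_sum_of_subset_of_nonneg (Finset.subset_univ s)
      (fun k _ _ => sq_nonneg _)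
  have haS : ∑ k ∈ S, a k ^ 2 ≤ (1 / W) * X := by
    have h2 : W * ∑ k ∈ S, a k ^ 2 ≤ X := by
      rw [hXeq, Finset.mul_sum]
      calc ∑ k ∈ S, W * a k ^ 2 ≤ ∑ k ∈ S, (wpF k).re * a k ^ 2 := by
            refine Finset.sum_le_sum fun k hk => ?_
            exact mul_le_mul_of_nonneg_right
              (le_of_lt (hhatwp_W k (by simpa [hS] using hk))) (sq_nonneg _)
        _ ≤ ∑ k, (wpF k).re * a k ^ 2 :=
            Finset.sum_le_sum_of_subset_of_nonneg (Finset.subset_univ S)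
              (fun k _ _ => mul_nonneg (hwpF_nn k) (sq_nonneg _))
    rw [one_div, ← le_inv_mul_iff₀ hW] at *
    linarith [h2]
  -- assembling
  rw [hLHS]
  have hsplit : ∑ k, wF k * (inner ℂ B (Pk k A) : ℂ)
      = (∑ k ∈ S, wF k * (inner ℂ B (Pk k A) : ℂ)) + ∑ k ∈ Sᶜ, wF k * (inner ℂ B (Pk k A) : ℂ) :=
    (Finset.sum_add_sum_compl S _).symm
  have hbound1 : ‖(∑ k ∈ S, wF k * (inner ℂ B (Pk k A) : ℂ))‖
      ≤ Real.sqrt ((1 / W) * X) * Real.sqrt ((inner ℂ B B : ℂ).re) := by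
    calc ‖(∑ k ∈ S, wF k * (inner ℂ B (Pk k A) : ℂ))‖
        ≤ ∑ k ∈ S, ‖(wF k * (inner ℂ B (Pk k A) : ℂ))‖ := by
          simpa using norm_sum_le S (fun k => wF k * (inner ℂ B (Pk k A) : ℂ))
      _ ≤ ∑ k ∈ S, b k * a k := by
          refine Finset.sum_le_sum fun k _ => ?_
          rw [norm_mul]
          calc ‖(wF k)‖ * ‖(inner ℂ B (Pk k A) : ℂ)‖
              ≤ 1 * (b k * a k) :=
                mul_le_mul (hwF1 k) (habs_inner k) (norm_nonneg _) zero_le_one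
            _ = b k * a k := one_mul _
      _ ≤ Real.sqrt (∑ k ∈ S, a k ^ 2) * Real.sqrt (∑ k ∈ S, b k ^ 2) := hCS S
      _ ≤ Real.sqrt ((1 / W) * X) * Real.sqrt ((inner ℂ B B : ℂ).re) :=
          mul_le_mul (Real.sqrt_le_sqrt haS) (Real.sqrt_le_sqrt (hbB S))
            (Real.sqrt_nonneg _) (Real.sqrt_nonneg _)
  have hbound2 : ‖(∑ k ∈ Sᶜ, wF k * (inner ℂ B (Pk k A) : ℂ))‖
      ≤ w₀ * Real.sqrt ((inner ℂ A A : ℂ).re) * Real.sqrt ((inner ℂ B B : ℂ).re) := by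
    calc ‖(∑ k ∈ Sᶜ, wF k * (inner ℂ B (Pk k A) : ℂ))‖
        ≤ ∑ k ∈ Sᶜ, ‖(wF k * (inner ℂ B (Pk k A) : ℂ))‖ := by
          simpa using norm_sum_le Sᶜ (fun k => wF k * (inner ℂ B (Pk k A) : ℂ))
      _ ≤ ∑ k ∈ Sᶜ, w₀ * (b k * a k) := by
          refine Finset.sum_le_sum fun k hk => ?_
          rw [norm_mul]
          have hk' : ΔE ≤ |E k| := by
            simp [hS, Finset.mem_compl] at hk
            linarith [hk]
          exact mul_le_mul (hhatw k hk') (habs_inner k) (norm_nonneg _) hw₀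
      _ = w₀ * ∑ k ∈ Sᶜ, b k * a k := by rw [Finset.mul_sum]
      _ ≤ w₀ * (Real.sqrt (∑ k ∈ Sᶜ, a k ^ 2) * Real.sqrt (∑ k ∈ Sᶜ, b k ^ 2)) :=
          mul_le_mul_of_nonneg_left (hCS Sᶜ) hw₀
      _ ≤ w₀ * (Real.sqrt ((inner ℂ A A : ℂ).re) * Real.sqrt ((inner ℂ B B : ℂ).re)) := by
          refine mul_le_mul_of_nonneg_left ?_ hw₀
          exact mul_le_mul (Real.sqrt_le_sqrt (haA Sᶜ)) (Real.sqrt_le_sqrt (hbB Sᶜ))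
            (Real.sqrt_nonneg _) (Real.sqrt_nonneg _)
      _ = w₀ * Real.sqrt ((inner ℂ A A : ℂ).re) * Real.sqrt ((inner ℂ B B : ℂ).re) := by ring
  calc ‖(∑ k, wF k * (inner ℂ B (Pk k A) : ℂ))‖
      ≤ ‖(∑ k ∈ S, wF k * (inner ℂ B (Pk k A) : ℂ))‖
        + ‖(∑ k ∈ Sᶜ, wF k * (inner ℂ B (Pk k A) : ℂ))‖ := by
        rw [hsplit]; exact norm_add_le _ _
    _ ≤ Real.sqrt ((1 / W) * X) * Real.sqrt ((inner ℂ B B : ℂ).re)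
        + w₀ * Real.sqrt ((inner ℂ A A : ℂ).re) * Real.sqrt ((inner ℂ B B : ℂ).re) :=
        add_le_add hbound1 hbound2
    _ = (Real.sqrt ((1 / W) * X) + w₀ * Real.sqrt ((inner ℂ A A : ℂ).re))
        * Real.sqrt ((inner ℂ B B : ℂ).re) := by ring
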